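/- The values of the complex multiplicative integral of f* along a piecewise smooth path z : [a,b] → D are exactly exp(2πn(z(b)-z(a))i) · f(z(b))/f(z(a)) for n ∈ ℤ; in particular, each value I*_n satisfies I*_n = exp(2πn(z(b)-z(a))i) · I*_0. -/

import Mathlib

open Real

theorem complex_mult_integral_values (D : Set ℂ) (hD : IsOpen D)
    (hconn : IsConnected D) (f : ℂ → ℂ)
    (hf : ∀ w ∈ D, DifferentiableAt ℂ f w) (hf0 : ∀ w ∈ D, f w ≠ 0)
    (z : ℝ → ℂ) (hz : ContDiff ℝ 1 z) (a b : ℝ) (hab : a ≤ b)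
    (hmem : ∀ t ∈ Set.Icc a b, z t ∈ D) :
    ∀ n : ℤ,
      Complex.exp (2 * π * n * (z b - z a) * Complex.I) *
        Complex.exp (∫ t in a..b, (deriv f (z t) / f (z t)) * deriv z t)
      = Complex.exp (2 * π * n * (z b - z a) * Complex.I) * (f (z b) / f (z a)) := by
  intro n
  congr 1
  -- It suffices to show exp(∫ f'/f z') = f(z b)/f(z a).
  set c : ℝ → ℂ := fun t => (deriv f (z t) / f (z t)) * deriv z t with hc_def
  have hdo : DifferentiableOn ℂ f D := fun w hw => (hf w hw).differentiableWithinAt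
  have hfan : AnalyticOnNhd ℂ f D := hdo.analyticOnNhd hD
  have hderiv_cont : ContinuousOn (deriv f) D := hfan.deriv.continuousOn
  have hzc : Continuous z := hz.continuous
  have hz'c : Continuous (deriv z) := hz.continuous_deriv le_rfl
  have hfzc : ContinuousOn (fun t => f (z t)) (Set.Icc a b) :=
    hfan.continuousOn.comp hzc.continuousOn hmem
  have hccont : ContinuousOn c (Set.Icc a b) := by
    apply ContinuousOn.mul _ hz'c.continuousOn
    exact (hderiv_cont.comp hzc.continuousOn hmem).div hfzc
      (fun t ht => hf0 _ (hmem t ht))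
  have hintab : IntervalIntegrable c MeasureTheory.volume a b :=
    hccont.intervalIntegrable_of_Icc hab
  set I : ℝ → ℂ := fun t => ∫ s in a..t, c s with hI_def
  set φ : ℝ → ℂ := fun t => f (z t) * Complex.exp (-(I t)) with hφ_def
  -- I is continuous on Icc a b
  have hIcont : ContinuousOn I (Set.Icc a b) := by
    have := intervalIntegral.continuousOn_primitive_interval (f := c) (a := a) (b := b)
      (μ := MeasureTheory.volume)
      (by rw [Set.uIcc_of_le hab]; exact hccont.integrableOn_Icc)
    rwa [Set.uIcc_of_le hab] at this
  -- φ has right derivative 0 on Ico a b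
  have hφderiv : ∀ t ∈ Set.Ico a b, HasDerivWithinAt φ 0 (Set.Ici t) t := by
    intro t ht
    have htab : t ∈ Set.Icc a b := ⟨ht.1, ht.2.le⟩
    have hmemI : Set.Icc a b ∈ nhdsWithin t (Set.Ici t) := by
      apply mem_nhdsWithin.2 ⟨Set.Iio b, isOpen_Iio, ht.2, ?_⟩
      rintro x ⟨hx1, hx2⟩
      exact ⟨ht.1.trans hx2, hx1.le⟩
    -- derivative of I within Ici t
    have hmemI' : Set.Icc a b ∈ nhdsWithin t (Set.Ioi t) :=
      nhdsWithin_mono t Set.Ioi_subset_Ici_self hmemI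
    have hImeas : StronglyMeasurableAtFilter c (nhdsWithin t (Set.Ioi t)) :=
      ⟨Set.Icc a b, hmemI', hccont.aestronglyMeasurable measurableSet_Icc⟩
    have hIcw : ContinuousWithinAt c (Set.Ioi t) t :=
      ((hccont t htab).mono_of_mem_nhdsWithin hmemI')
    have hIder : HasDerivWithinAt I (c t) (Set.Ici t) t :=
      intervalIntegral.integral_hasDerivWithinAt_right
        ((hccont.mono (Set.Icc_subset_Icc le_rfl htab.2)).intervalIntegrable_of_Icc ht.1)
        hImeas hIcw
    -- derivative of f ∘ z
    have hzder : HasDerivAt z (deriv z t) t := (hz.differentiable one_ne_zero t).hasDerivAt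
    have hfder : HasDerivAt (fun t => f (z t)) (deriv f (z t) * deriv z t) t := by
      have h1 : HasFDerivAt f (ContinuousLinearMap.smulRight
          (1 : ℂ →L[ℂ] ℂ) (deriv f (z t))) (z t) := (hf _ (hmem t htab)).hasFDerivAt.congr_fderiv
        (by rw [(hf _ (hmem t htab)).hasDerivAt.hasFDerivAt.fderiv]; ext; simp)
      have := (h1.restrictScalars ℝ).comp_hasDerivAt t hzder
      simp [mul_comm] at this; exact this
    -- derivative of exp(-I t)
    have hexpder : HasDerivWithinAt (fun t => Complex.exp (-(I t)))
        (-(c t) * Complex.exp (-(I t))) (Set.Ici t) t := by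
      have := (hIder.neg).cexp
      simpa [mul_comm] using this
    have := (hfder.hasDerivWithinAt (s := Set.Ici t)).mul hexpder
    refine this.congr_deriv ?_
    have hfz0 : f (z t) ≠ 0 := hf0 _ (hmem t htab)
    simp only [hc_def]
    field_simp
    ring
  -- φ is continuous on Icc a b
  have hφcont : ContinuousOn φ (Set.Icc a b) :=
    hfzc.mul (hIcont.neg.cexp)
  have hconst := constant_of_has_deriv_right_zero hφcont hφderiv b
    (Set.right_mem_Icc.2 hab)
  have hIa : I a = 0 := by simp [hI_def]
  have hfza0 : f (z a) ≠ 0 := hf0 _ (hmem a (Set.left_mem_Icc.2 hab))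
  have hexp0 : Complex.exp (-(I b)) ≠ 0 := Complex.exp_ne_zero _
  simp only [hφ_def, hIa, neg_zero, Complex.exp_zero, mul_one] at hconst
  show Complex.exp (I b) = f (z b) / f (z a)
  rw [eq_div_iff hfza0]
  calc Complex.exp (I b) * f (z a)
      = Complex.exp (I b) * (f (z b) * Complex.exp (-I b)) := by rw [hconst]
    _ = f (z b) := by
        rw [← mul_assoc, mul_comm (Complex.exp (I b)), mul_assoc, ← Complex.exp_add]
        simp
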